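/- Every zero-dimensional Polish space X is homeomorphic to a closed subset of the Baire space 𝒩; that is, there exists an injective continuous map f : X → 𝒩 such that f '' X is closed in 𝒩 and the inverse map f '' X → X is continuous (equivalently, f is a closed topological embedding). -/

import Mathlib

open Set Topology Metric

namespace Stmt6Aux

variable {X : Type*} [MetricSpace X] [SecondCountableTopology X]

/-- Any clopen set in a zero-dimensional second-countable metric space can be partitioned
into countably many clopen pieces of diameter at most `ε`. -/
theorem exists_partition (hzd : TopologicalSpace.IsTopologicalBasis {U : Set X | IsClopen U})
    (C : Set X) (hC : IsClopen C) (ε : ℝ) (hε : 0 < ε) :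
    ∃ D : ℕ → Set X, (∀ i, IsClopen (D i)) ∧
      (∀ i, ∀ x ∈ D i, ∀ y ∈ D i, dist x y ≤ ε) ∧
      Pairwise (Function.onFun Disjoint D) ∧ (⋃ i, D i) = C := by
  set S : Set (Set X) := {U | IsClopen U ∧ U ⊆ C ∧ ∀ x ∈ U, ∀ y ∈ U, dist x y ≤ ε} with hSdef
  have hScover : ⋃₀ S = C := by
    apply subset_antisymm
    · exact sUnion_subset fun U hU => hU.2.1
    · intro x hx
      have hopen : IsOpen (C ∩ ball x (ε / 2)) := hC.2.inter isOpen_ball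
      have hxmem : x ∈ C ∩ ball x (ε / 2) := ⟨hx, mem_ball_self (by linarith)⟩
      obtain ⟨U, hU, hxU, hUsub⟩ := hzd.exists_subset_of_mem_open hxmem hopen
      refine ⟨U, ⟨hU, fun y hy => (hUsub hy).1, ?_⟩, hxU⟩
      intro y hy z hz
      have h1 : dist y x < ε / 2 := (hUsub hy).2
      have h2 : dist x z < ε / 2 := by
        have := mem_ball.mp (hUsub hz).2; rwa [dist_comm]
      calc dist y z ≤ dist y x + dist x z := dist_triangle _ _ _
        _ ≤ ε := by linarith
  obtain ⟨T, hTc, hTS, hTun⟩ := TopologicalSpace.isOpen_sUnion_countable S fun s hs => hs.1.2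
  have hT'c : (insert (∅ : Set X) T).Countable := hTc.insert _
  obtain ⟨e, he⟩ := hT'c.exists_eq_range ⟨∅, mem_insert _ _⟩
  have heP : ∀ i, IsClopen (e i) ∧ e i ⊆ C ∧ ∀ x ∈ e i, ∀ y ∈ e i, dist x y ≤ ε := by
    intro i
    have : e i ∈ insert (∅ : Set X) T := he ▸ mem_range_self i
    rcases this with h | h
    · simp only [h]; exact ⟨isClopen_empty, empty_subset _, fun x hx => hx.elim⟩
    · exact hTS h
  have heun : (⋃ i, e i) = C := by
    rw [← sUnion_range, ← he, sUnion_insert, hTun, hScover, empty_union]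
  refine ⟨disjointed e, ?_, ?_, disjoint_disjointed e, by rw [iUnion_disjointed, heun]⟩
  · intro i
    have hps : ∀ n, IsClopen ((partialSups e) n) := by
      intro n
      induction n with
      | zero => simpa using (heP 0).1
      | succ n ih => rw [← Order.succ_eq_add_one, partialSups_succ]; exact ih.union (heP (n + 1)).1
    cases i with
    | zero => simpa [disjointed_zero] using (heP 0).1
    | succ n => rw [← Order.succ_eq_add_one, disjointed_succ _ (not_isMax n)]; exact (heP (n + 1)).1.diff (hps n)
  · intro i x hx y hy
    exact (heP i).2.2 x (disjointed_subset e i hx) y (disjointed_subset e i hy)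

open scoped Classical in
/-- A choice of such a partition, at scale `(1/2)^n`. -/
noncomputable def part (hzd : TopologicalSpace.IsTopologicalBasis {U : Set X | IsClopen U})
    (C : Set X) (n : ℕ) (i : ℕ) : Set X :=
  if h : IsClopen C then
    (exists_partition hzd C h ((1 / 2) ^ n) (by positivity)).choose i
  else ∅

theorem part_spec (hzd : TopologicalSpace.IsTopologicalBasis {U : Set X | IsClopen U})
    {C : Set X} (hC : IsClopen C) (n : ℕ) :
    (∀ i, IsClopen (part hzd C n i)) ∧
      (∀ i, ∀ x ∈ part hzd C n i, ∀ y ∈ part hzd C n i, dist x y ≤ (1 / 2) ^ n) ∧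
      Pairwise (Function.onFun Disjoint fun i => part hzd C n i) ∧ (⋃ i, part hzd C n i) = C := by
  simp only [part, dif_pos hC]
  exact (exists_partition hzd C hC ((1 / 2) ^ n) (by positivity)).choose_spec

/-- The Lusin scheme of clopen sets. -/
noncomputable def scheme (hzd : TopologicalSpace.IsTopologicalBasis {U : Set X | IsClopen U}) :
    List ℕ → Set X
  | [] => univ
  | a :: l => part hzd (scheme hzd l) l.length a

variable (hzd : TopologicalSpace.IsTopologicalBasis {U : Set X | IsClopen U})

theorem scheme_isClopen : ∀ l : List ℕ, IsClopen (scheme hzd l)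
  | [] => isClopen_univ
  | _ :: l => ((part_spec hzd (scheme_isClopen l) l.length).1 _)

theorem scheme_iUnion (l : List ℕ) : (⋃ a, scheme hzd (a :: l)) = scheme hzd l :=
  (part_spec hzd (scheme_isClopen hzd l) l.length).2.2.2

theorem scheme_subset (a : ℕ) (l : List ℕ) : scheme hzd (a :: l) ⊆ scheme hzd l := by
  rw [← scheme_iUnion hzd l]; exact subset_iUnion (fun a => scheme hzd (a :: l)) a

theorem scheme_dist (a : ℕ) (l : List ℕ) {x y : X} (hx : x ∈ scheme hzd (a :: l))
    (hy : y ∈ scheme hzd (a :: l)) : dist x y ≤ (1 / 2) ^ l.length :=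
  (part_spec hzd (scheme_isClopen hzd l) l.length).2.1 a x hx y hy

theorem scheme_disjoint {a b : ℕ} (l : List ℕ) (hab : a ≠ b) :
    Disjoint (scheme hzd (a :: l)) (scheme hzd (b :: l)) :=
  (part_spec hzd (scheme_isClopen hzd l) l.length).2.2.1 hab

open scoped Classical in
/-- Index of a child cell containing `x`. -/
noncomputable def idx (l : List ℕ) (x : X) : ℕ :=
  if h : ∃ a, x ∈ scheme hzd (a :: l) then h.choose else 0

/-- The list of indices of cells containing `x`, from level `n` down to level `0`. -/
noncomputable def code (x : X) : ℕ → List ℕ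
  | 0 => []
  | n + 1 => idx hzd (code x n) x :: code x n

theorem code_length (x : X) : ∀ n, (code hzd x n).length = n
  | 0 => rfl
  | n + 1 => by rw [code, List.length_cons, code_length x n]

theorem mem_code (x : X) : ∀ n, x ∈ scheme hzd (code hzd x n)
  | 0 => mem_univ x
  | n + 1 => by
    have hx : x ∈ scheme hzd (code hzd x n) := mem_code x n
    rw [← scheme_iUnion hzd (code hzd x n)] at hx
    obtain ⟨a, ha⟩ := mem_iUnion.mp hx
    have hex : ∃ a, x ∈ scheme hzd (a :: code hzd x n) := ⟨a, ha⟩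
    rw [code, idx, dif_pos hex]
    exact hex.choose_spec

theorem code_unique : ∀ l : List ℕ, ∀ x : X, x ∈ scheme hzd l → code hzd x l.length = l := by
  intro l
  induction l with
  | nil => intro x _; rfl
  | cons a l ih =>
    intro x hx
    have hxl : x ∈ scheme hzd l := scheme_subset hzd a l hx
    have hcode : code hzd x l.length = l := ih x hxl
    have hx1 : x ∈ scheme hzd (code hzd x (l.length + 1)) := mem_code hzd x (l.length + 1)
    simp only [code, List.length_cons] at hx1 ⊢
    rw [hcode] at hx1 ⊢
    congr 1
    by_contra hne
    exact (scheme_disjoint hzd l hne).ne_of_mem hx1 hx rfl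

/-- The embedding into Baire space. -/
noncomputable def embed (x : X) (n : ℕ) : ℕ :=
  idx hzd (code hzd x n) x

/-- The length-`n` initial segment (in reverse) of a sequence. -/
def pre (y : ℕ → ℕ) : ℕ → List ℕ
  | 0 => []
  | n + 1 => y n :: pre y n

theorem pre_length (y : ℕ → ℕ) : ∀ n, (pre y n).length = n
  | 0 => rfl
  | n + 1 => by rw [pre, List.length_cons, pre_length y n]

theorem pre_embed (x : X) : ∀ n, pre (embed hzd x) n = code hzd x n
  | 0 => rfl
  | n + 1 => by rw [pre, code, pre_embed x n]; rfl

theorem scheme_pre_anti (y : ℕ → ℕ) {n m : ℕ} (h : n ≤ m) :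
    scheme hzd (pre y m) ⊆ scheme hzd (pre y n) := by
  induction m with
  | zero => rw [Nat.le_zero.mp h]
  | succ m ih =>
    rcases Nat.lt_or_ge n (m + 1) with hlt | hge
    · exact (scheme_subset hzd (y m) (pre y m)).trans (ih (Nat.lt_succ_iff.mp hlt))
    · rw [Nat.le_antisymm h hge]

theorem pre_eq_iff (y z : ℕ → ℕ) : ∀ n, pre y n = pre z n ↔ ∀ i < n, y i = z i := by
  intro n
  induction n with
  | zero => simp [pre]
  | succ n ih =>
    simp only [pre, List.cons.injEq, ih]
    constructor
    · rintro ⟨h1, h2⟩ i hi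
      rcases Nat.lt_succ_iff_lt_or_eq.mp hi with hi | hi
      · exact h2 i hi
      · rwa [hi]
    · intro h
      exact ⟨h n (Nat.lt_succ_self n), fun i hi => h i (hi.trans (Nat.lt_succ_self n))⟩

theorem isOpen_pre_eq (y : ℕ → ℕ) (n : ℕ) : IsOpen {z : ℕ → ℕ | pre z n = pre y n} := by
  have : {z : ℕ → ℕ | pre z n = pre y n} = ⋂ i ∈ Finset.range n, (fun z : ℕ → ℕ => z i) ⁻¹' {y i} := by
    ext z
    simp only [mem_setOf_eq, pre_eq_iff, mem_iInter, Finset.mem_range, mem_preimage,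
      mem_singleton_iff]
  rw [this]
  exact isOpen_biInter_finset fun i _ => (continuous_apply i).isOpen_preimage _ (isOpen_discrete _)

theorem code_head {x : X} {n : ℕ} : code hzd x (n + 1) = embed hzd x n :: code hzd x n := rfl

theorem mem_scheme_dist {x y : X} {n : ℕ} (hx : x ∈ scheme hzd (code hzd x (n + 1)))
    (hy : y ∈ scheme hzd (code hzd x (n + 1))) : dist x y ≤ (1 / 2) ^ n := by
  rw [code_head] at hx hy
  have := scheme_dist hzd (embed hzd x n) (code hzd x n) hx hy
  rwa [code_length] at this

theorem embed_continuous : Continuous (embed hzd) := by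
  refine continuous_pi fun n => ?_
  refine IsLocallyConstant.continuous ?_
  rw [IsLocallyConstant.iff_exists_open]
  intro x
  refine ⟨scheme hzd (code hzd x (n + 1)), (scheme_isClopen hzd _).2,
    mem_code hzd x (n + 1), fun y hy => ?_⟩
  have hcy : code hzd y (n + 1) = code hzd x (n + 1) := by
    have := code_unique hzd (code hzd x (n + 1)) y hy
    rwa [code_length] at this
  rw [code_head, code_head] at hcy
  exact (List.cons.injEq _ _ _ _).mp hcy |>.1

theorem embed_injective : Function.Injective (embed hzd) := by
  intro x y hxy
  have hcode : ∀ n, code hzd x n = code hzd y n := by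
    intro n
    rw [← pre_embed hzd x n, ← pre_embed hzd y n, hxy]
  have hd : ∀ n : ℕ, dist x y ≤ (1 / 2) ^ n := by
    intro n
    refine mem_scheme_dist hzd (mem_code hzd x (n + 1)) ?_
    rw [hcode (n + 1)]
    exact mem_code hzd y (n + 1)
  have h0 : dist x y ≤ 0 :=
    ge_of_tendsto' (tendsto_pow_atTop_nhds_zero_of_lt_one (by norm_num) (by norm_num)) hd
  exact dist_le_zero.mp h0

theorem embed_inducing : Topology.IsInducing (embed hzd) := by
  rw [isInducing_iff_nhds]
  intro x
  refine le_antisymm ((embed_continuous hzd).continuousAt (x := x)).le_comap ?_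
  intro s hs
  rw [Filter.mem_comap]
  obtain ⟨ε, hε, hball⟩ := Metric.mem_nhds_iff.mp hs
  obtain ⟨n, hn⟩ : ∃ n : ℕ, (1 / 2 : ℝ) ^ n < ε := exists_pow_lt_of_lt_one hε (by norm_num)
  refine ⟨{z | pre z (n + 1) = pre (embed hzd x) (n + 1)}, ?_, ?_⟩
  · exact (isOpen_pre_eq _ _).mem_nhds rfl
  · intro y hy
    simp only [mem_preimage, mem_setOf_eq, pre_embed] at hy
    have hcy : code hzd y (n + 1) = code hzd x (n + 1) := hy
    apply hball
    rw [mem_ball, dist_comm]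
    refine lt_of_le_of_lt ?_ hn
    refine mem_scheme_dist hzd (mem_code hzd x (n + 1)) ?_
    rw [← hcy]
    exact mem_code hzd y (n + 1)

theorem range_embed [CompleteSpace X] :
    range (embed hzd) = {y | ∀ n, (scheme hzd (pre y n)).Nonempty} := by
  apply subset_antisymm
  · rintro _ ⟨x, rfl⟩ n
    rw [pre_embed]
    exact ⟨x, mem_code hzd x n⟩
  · intro y hy
    set u : ℕ → X := fun n => (hy (n + 1)).some with hu
    have humem : ∀ n, u n ∈ scheme hzd (pre y (n + 1)) := fun n => (hy (n + 1)).some_mem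
    have hcauchy : CauchySeq u := by
      refine cauchySeq_of_le_tendsto_0 (fun N => (1 / 2 : ℝ) ^ N) (fun n m N hn hm => ?_)
        (tendsto_pow_atTop_nhds_zero_of_lt_one (by norm_num) (by norm_num))
      have h1 : u n ∈ scheme hzd (pre y (N + 1)) :=
        scheme_pre_anti hzd y (Nat.succ_le_succ hn) (humem n)
      have h2 : u m ∈ scheme hzd (pre y (N + 1)) :=
        scheme_pre_anti hzd y (Nat.succ_le_succ hm) (humem m)
      have := scheme_dist hzd (y N) (pre y N) h1 h2
      rwa [pre_length] at this
    obtain ⟨z, hz⟩ := cauchySeq_tendsto_of_complete hcauchy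
    have hzmem : ∀ n, z ∈ scheme hzd (pre y n) := by
      intro n
      refine (scheme_isClopen hzd (pre y n)).isClosed.mem_of_tendsto hz ?_
      refine Filter.eventually_atTop.mpr ⟨n, fun m hm => ?_⟩
      exact scheme_pre_anti hzd y (hm.trans (Nat.le_succ m)) (humem m)
    have hcz : ∀ n, code hzd z n = pre y n := by
      intro n
      have := code_unique hzd (pre y n) z (hzmem n)
      rwa [pre_length] at this
    refine ⟨z, funext fun n => ?_⟩
    have : code hzd z (n + 1) = pre y (n + 1) := hcz (n + 1)
    rw [code_head] at this
    exact ((List.cons.injEq _ _ _ _).mp this).1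

theorem isClosed_rangeSet : IsClosed {y : ℕ → ℕ | ∀ n, (scheme hzd (pre y n)).Nonempty} := by
  rw [← isOpen_compl_iff]
  rw [isOpen_iff_mem_nhds]
  intro y hy
  simp only [mem_compl_iff, mem_setOf_eq, not_forall] at hy
  obtain ⟨n, hn⟩ := hy
  rw [_root_.mem_nhds_iff]
  refine ⟨{z | pre z n = pre y n}, ?_, isOpen_pre_eq y n, rfl⟩
  intro z hz
  simp only [mem_compl_iff, mem_setOf_eq, not_forall]
  exact ⟨n, by rwa [hz]⟩

end Stmt6Aux

/-- Every zero-dimensional Polish space embeds as a closed subset of the Baire space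
`ℕ → ℕ`: there is an injective continuous map with closed range whose inverse is
continuous, i.e. a closed topological embedding. -/
theorem stmt6 {X : Type*} [TopologicalSpace X] [PolishSpace X]
    (hzd : TopologicalSpace.IsTopologicalBasis {U : Set X | IsClopen U}) :
    ∃ f : X → (ℕ → ℕ), Topology.IsClosedEmbedding f := by
  letI := TopologicalSpace.upgradeIsCompletelyMetrizable X
  refine ⟨Stmt6Aux.embed hzd, ⟨⟨Stmt6Aux.embed_inducing hzd, Stmt6Aux.embed_injective hzd⟩, ?_⟩⟩
  rw [Stmt6Aux.range_embed hzd]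
  exact Stmt6Aux.isClosed_rangeSet hzd
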